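/- Let u be a Schwartz function on R and f ∈ A^p(T), 1 ≤ p < ∞, considered as a 1-periodic tempered distribution on R. Define ⦀u⦀ := 10·sup_{x∈R} (1+x²)|û(x)|. Then the product u·f belongs to A^p(R) and ‖u·f‖_{A^p(R)} ≤ ⦀u⦀ · ‖f‖_{A^p(T)}. -/

import Mathlib

open MeasureTheory

/-- The Fourier transform on `ℝ`, `û(x) = ∫ u(t) e^{-2πixt} dt`. -/
noncomputable def ftR (u : ℝ → ℂ) (x : ℝ) : ℂ :=
  ∫ t : ℝ, u t * Complex.exp ((-2) * (Real.pi : ℂ) * Complex.I * (x : ℂ) * (t : ℂ))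

/-- The auxiliary norm `⦀u⦀ = 10 · sup_x (1+x²)|û(x)|` on the Schwartz space. -/
noncomputable def nmb (u : SchwartzMap ℝ ℂ) : ℝ :=
  10 * ⨆ x : ℝ, (1 + x ^ 2) * ‖ftR (⇑u) x‖

section Aux

open ENNReal

lemma teleA (N : ℕ) : ∑ j ∈ Finset.range (N+1), ((j:ℝ)*((j:ℝ)+1))⁻¹ = 1 - ((N:ℝ)+1)⁻¹ := by
  induction N with
  | zero => norm_num
  | succ N ih =>
    rw [Finset.sum_range_succ, ih]
    have h1 : ((N:ℝ)+1) ≠ 0 := by positivity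
    have h2 : ((N:ℝ)+2) ≠ 0 := by positivity
    push_cast
    field_simp
    ring

lemma teleB : ∑' j : ℕ, ENNReal.ofReal (((j:ℝ)*((j:ℝ)+1))⁻¹) ≤ 1 := by
  rw [ENNReal.tsum_eq_iSup_sum]
  refine iSup_le fun s => ?_
  obtain ⟨N, hN⟩ := s.exists_nat_subset_range
  calc ∑ j ∈ s, ENNReal.ofReal (((j:ℝ)*((j:ℝ)+1))⁻¹)
      ≤ ∑ j ∈ Finset.range (N+1), ENNReal.ofReal (((j:ℝ)*((j:ℝ)+1))⁻¹) :=
        Finset.sum_le_sum_of_subset (hN.trans (Finset.range_subset_range.2 (Nat.le_succ N)))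
    _ = ENNReal.ofReal (∑ j ∈ Finset.range (N+1), ((j:ℝ)*((j:ℝ)+1))⁻¹) := by
        rw [ENNReal.ofReal_sum_of_nonneg]; intro j _; positivity
    _ ≤ 1 := by
        rw [teleA]
        apply ENNReal.ofReal_le_one.2
        have : (0:ℝ) ≤ ((N:ℝ)+1)⁻¹ := by positivity
        linarith

lemma shiftA {y : ℝ} (hy : |y| ≤ 1/2) {k : ℕ} (hk : k ≠ 0) :
    ((1 + (y - (k:ℝ))^2)⁻¹ : ℝ) ≤ 2 * (((k:ℝ)*((k:ℝ)+1))⁻¹) := by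
  obtain ⟨hy1, hy2⟩ := abs_le.1 hy
  have hk1 : (1:ℝ) ≤ k := by exact_mod_cast Nat.one_le_iff_ne_zero.2 hk
  rw [inv_le_comm₀ (by positivity) (by positivity), mul_inv, inv_inv]
  nlinarith [sq_nonneg ((k:ℝ) - 2), sq_nonneg (y + 1/2), sq_nonneg (y - 1/2), sq_nonneg ((k:ℝ)*y)]

lemma shiftB {y : ℝ} (hy : |y| ≤ 1/2) (k : ℕ) :
    ((1 + (y + ((k:ℝ)+1))^2)⁻¹ : ℝ) ≤ 2 * ((((k:ℝ)+1)*((k:ℝ)+2))⁻¹) := by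
  obtain ⟨hy1, hy2⟩ := abs_le.1 hy
  have hk : (0:ℝ) ≤ k := Nat.cast_nonneg k
  rw [inv_le_comm₀ (by positivity) (by positivity), mul_inv, inv_inv]
  nlinarith [sq_nonneg ((k:ℝ) - 1), sq_nonneg (y + 1/2), sq_nonneg (y - 1/2), sq_nonneg ((k:ℝ)*y)]

lemma sum_ten (x : ℝ) : ∑' n : ℤ, ENNReal.ofReal ((1 + (x - (n:ℝ))^2)⁻¹) ≤ ENNReal.ofReal 10 := by
  set m : ℤ := round x with hm
  set y : ℝ := x - m with hy
  have hyb : |y| ≤ 1/2 := abs_sub_round x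
  have hre : ∑' n : ℤ, ENNReal.ofReal ((1 + (x - (n:ℝ))^2)⁻¹)
      = ∑' k : ℤ, ENNReal.ofReal ((1 + (y - (k:ℝ))^2)⁻¹) := by
    rw [← (Equiv.addLeft m).tsum_eq (fun n : ℤ => ENNReal.ofReal ((1 + (x - (n:ℝ))^2)⁻¹))]
    congr 1; funext k
    have h2 : x - ((m + k : ℤ) : ℝ) = y - (k:ℝ) := by push_cast; rw [hy]; ring
    simp only [Equiv.coe_addLeft]
    rw [h2]
  rw [hre, tsum_of_nat_of_neg_add_one ENNReal.summable ENNReal.summable]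
  have hnat : ∑' k : ℕ, ENNReal.ofReal ((1 + (y - (k:ℝ))^2)⁻¹) ≤ 3 := by
    rw [ENNReal.tsum_eq_add_tsum_ite 0]
    have h0 : ENNReal.ofReal ((1 + (y - ((0:ℕ):ℝ))^2)⁻¹) ≤ 1 := by
      apply ENNReal.ofReal_le_one.2
      rw [inv_le_one_iff₀]; right; nlinarith [sq_nonneg (y - ((0:ℕ):ℝ))]
    refine le_trans (add_le_add h0 ?_) (by norm_num : (1:ℝ≥0∞) + 2 ≤ 3)
    have hmid : ∑' k : ℕ, ENNReal.ofReal (2 * (((k:ℝ)*((k:ℝ)+1))⁻¹)) ≤ 2 := by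
      calc ∑' k : ℕ, ENNReal.ofReal (2 * (((k:ℝ)*((k:ℝ)+1))⁻¹))
          = 2 * ∑' k : ℕ, ENNReal.ofReal (((k:ℝ)*((k:ℝ)+1))⁻¹) := by
            simp_rw [ENNReal.ofReal_mul (by norm_num : (0:ℝ) ≤ 2)]
            rw [ENNReal.tsum_mul_left]
            norm_num
        _ ≤ 2 * 1 := by gcongr; exact teleB
        _ = 2 := by norm_num
    refine le_trans (ENNReal.tsum_le_tsum fun k => ?_) hmid
    by_cases hk : k = 0
    · simp [hk]
    · simp only [hk, if_false]
      exact ENNReal.ofReal_le_ofReal (shiftA hyb hk)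
  have hneg : ∑' k : ℕ, ENNReal.ofReal ((1 + (y - (((-((k:ℕ)+1)) : ℤ):ℝ))^2)⁻¹) ≤ 2 := by
    calc ∑' k : ℕ, ENNReal.ofReal ((1 + (y - (((-((k:ℕ)+1)) : ℤ):ℝ))^2)⁻¹)
        ≤ ∑' k : ℕ, ENNReal.ofReal (2 * ((((k:ℝ)+1)*((k:ℝ)+2))⁻¹)) := by
          apply ENNReal.tsum_le_tsum; intro k
          apply ENNReal.ofReal_le_ofReal
          have h3 : y - (((-((k:ℕ)+1)) : ℤ):ℝ) = y + ((k:ℝ)+1) := by push_cast; ring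
          rw [h3]; exact shiftB hyb k
      _ = 2 * ∑' k : ℕ, ENNReal.ofReal ((((k:ℝ)+1)*((k:ℝ)+2))⁻¹) := by
          simp_rw [ENNReal.ofReal_mul (by norm_num : (0:ℝ) ≤ 2)]
          rw [ENNReal.tsum_mul_left]; norm_num
      _ ≤ 2 * 1 := by
          gcongr
          calc ∑' k : ℕ, ENNReal.ofReal ((((k:ℝ)+1)*((k:ℝ)+2))⁻¹)
              ≤ ∑' k : ℕ, ENNReal.ofReal ((((k+1:ℕ):ℝ)*(((k+1:ℕ):ℝ)+1))⁻¹) := by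
                apply ENNReal.tsum_le_tsum; intro k
                apply ENNReal.ofReal_le_ofReal
                apply le_of_eq; push_cast; ring_nf
            _ ≤ ∑' k : ℕ, ENNReal.ofReal (((k:ℝ)*((k:ℝ)+1))⁻¹) := by
                apply Summable.tsum_le_tsum_of_inj (fun k => k+1) (add_left_injective 1)
                  (fun _ _ => zero_le) (fun k => le_refl _) ENNReal.summable ENNReal.summable
            _ ≤ 1 := teleB
      _ = 2 := by norm_num
  have hgoal : (3:ℝ≥0∞) + 2 ≤ ENNReal.ofReal 10 := by
    rw [show (10:ℝ) = ((10:ℕ):ℝ) by norm_num, ENNReal.ofReal_natCast]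
    norm_num
  exact le_trans (add_le_add hnat hneg) hgoal

lemma holder_tsum {p : ℝ} (hp : 1 ≤ p) (w f : ℤ → ℝ≥0∞) :
    ∑' i, w i * f i ≤ (∑' i, w i) ^ (1 - p⁻¹) * (∑' i, w i * f i ^ p) ^ p⁻¹ := by
  rw [ENNReal.tsum_eq_iSup_sum]
  refine iSup_le fun s => le_trans (ENNReal.inner_le_weight_mul_Lp_of_nonneg s hp w f) ?_
  have h1 : (0:ℝ) ≤ 1 - p⁻¹ := by
    have := inv_le_one_of_one_le₀ hp
    linarith
  gcongr <;> exact ENNReal.sum_le_tsum s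

lemma ftR_eq (u : SchwartzMap ℝ ℂ) :
    (fun x => ftR (⇑u) x) = ⇑(SchwartzMap.fourierTransformCLM ℂ u) := by
  funext x
  rw [SchwartzMap.fourierTransformCLM_apply]
  rw [SchwartzMap.fourier_coe, Real.fourier_real_eq_integral_exp_smul]
  unfold ftR
  congr 1
  funext t
  rw [smul_eq_mul, mul_comm]
  congr 2
  push_cast
  ring

end Aux

/-- For a Schwartz function `u` and `f ∈ A^p(𝕋)` with Fourier coefficients `b ∈ ℓ^p(ℤ)`,
the product `u·f` lies in `A^p(ℝ)`: its Fourier transform `x ↦ ∑_n b(n) û(x-n)` is in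
`L^p(ℝ)` with norm at most `⦀u⦀ · ‖f‖_{A^p(𝕋)}`. -/
theorem stmt4 (p : ℝ) (hp : 1 ≤ p) (u : SchwartzMap ℝ ℂ)
    (b : ℤ → ℂ) (hb : Summable (fun n => ‖b n‖ ^ p)) :
    MemLp (fun x : ℝ => ∑' n : ℤ, b n * ftR (⇑u) (x - n)) (ENNReal.ofReal p)
      (volume : Measure ℝ) ∧
    eLpNorm (fun x : ℝ => ∑' n : ℤ, b n * ftR (⇑u) (x - n)) (ENNReal.ofReal p)
        (volume : Measure ℝ)
      ≤ ENNReal.ofReal (nmb u * (∑' n : ℤ, ‖b n‖ ^ p) ^ (1/p)) := by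
  have hp0 : (0:ℝ) < p := lt_of_lt_of_le one_pos hp
  have hpne : p ≠ 0 := ne_of_gt hp0
  have hfun : ftR ⇑u = ⇑(SchwartzMap.fourierTransformCLM ℂ u) := ftR_eq u
  have hftc : Continuous (ftR ⇑u) := by
    rw [hfun]; exact (SchwartzMap.fourierTransformCLM ℂ u).continuous
  set C := ⨆ x : ℝ, (1 + x ^ 2) * ‖ftR (⇑u) x‖ with hC
  have hnmb_eq : nmb u = 10 * C := rfl
  have hCbdd : BddAbove (Set.range fun x : ℝ => (1 + x ^ 2) * ‖ftR (⇑u) x‖) := by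
    obtain ⟨C0, -, h0⟩ := (SchwartzMap.fourierTransformCLM ℂ u).decay 0 0
    obtain ⟨C2, -, h2⟩ := (SchwartzMap.fourierTransformCLM ℂ u).decay 2 0
    refine ⟨C0 + C2, ?_⟩
    rintro _ ⟨x, rfl⟩
    have e0 := h0 x
    have e2 := h2 x
    rw [norm_iteratedFDeriv_zero] at e0 e2
    rw [pow_zero, one_mul] at e0
    have hx2 : ‖x‖ ^ 2 = x ^ 2 := by rw [Real.norm_eq_abs, sq_abs]
    rw [hx2] at e2
    show (1 + x ^ 2) * ‖ftR (⇑u) x‖ ≤ C0 + C2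
    rw [congrFun hfun x]
    nlinarith [norm_nonneg ((SchwartzMap.fourierTransformCLM ℂ u) x)]
  have hCb : ∀ x : ℝ, (1 + x ^ 2) * ‖ftR (⇑u) x‖ ≤ C :=
    fun x => le_ciSup hCbdd x
  have hC0 : 0 ≤ C := Real.iSup_nonneg fun x => by positivity
  have hnmb0 : 0 ≤ nmb u := by rw [hnmb_eq]; linarith
  have hCle : ∀ y : ℝ, ‖ftR (⇑u) y‖ ≤ C * (1 + y^2)⁻¹ := by
    intro y
    have hpos : (0:ℝ) < 1 + y^2 := by positivity
    rw [mul_comm, inv_mul_eq_div, le_div_iff₀ hpos, mul_comm]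
    exact hCb y
  set M := ENNReal.ofReal (nmb u) with hM
  set W : ℤ → ℝ → ENNReal := fun n x => ENNReal.ofReal ‖ftR (⇑u) (x - (n:ℝ))‖ with hW
  set A : ℤ → ENNReal := fun n => ENNReal.ofReal ‖b n‖ with hA
  have hWle : ∀ y : ℝ, ENNReal.ofReal ‖ftR (⇑u) y‖
      ≤ ENNReal.ofReal C * ENNReal.ofReal ((1+y^2)⁻¹) := fun y => by
    rw [← ENNReal.ofReal_mul hC0]; exact ENNReal.ofReal_le_ofReal (hCle y)
  have hsumW : ∀ x : ℝ, ∑' n : ℤ, W n x ≤ M := by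
    intro x
    calc ∑' n : ℤ, W n x
        ≤ ∑' n : ℤ, ENNReal.ofReal C * ENNReal.ofReal ((1+(x-(n:ℝ))^2)⁻¹) :=
          ENNReal.tsum_le_tsum (fun n => hWle (x - n))
      _ = ENNReal.ofReal C * ∑' n : ℤ, ENNReal.ofReal ((1+(x-(n:ℝ))^2)⁻¹) :=
          ENNReal.tsum_mul_left
      _ ≤ ENNReal.ofReal C * ENNReal.ofReal 10 := by gcongr; exact sum_ten x
      _ = M := by
          rw [← ENNReal.ofReal_mul hC0, hM, hnmb_eq, mul_comm]
  have hsummable_inv : ∀ x : ℝ, Summable (fun n : ℤ => ((1 + (x - (n:ℝ))^2)⁻¹ : ℝ)) := by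
    intro x
    have hfin := lt_of_le_of_lt (sum_ten x) ENNReal.ofReal_lt_top
    have h := ENNReal.summable_toReal hfin.ne
    refine h.congr fun n => ?_
    exact ENNReal.toReal_ofReal (by positivity)
  have hT : ∀ n : ℤ, ‖b n‖ ≤ (∑' n : ℤ, ‖b n‖ ^ p) ^ (1/p) := by
    intro n
    have h1 : ‖b n‖ ^ p ≤ ∑' n : ℤ, ‖b n‖ ^ p :=
      Summable.le_tsum hb n (fun m _ => by positivity)
    have h2 := Real.rpow_le_rpow (by positivity) h1 (by positivity : (0:ℝ) ≤ 1/p)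
    rwa [← Real.rpow_mul (norm_nonneg _), mul_one_div, div_self hpne, Real.rpow_one] at h2
  have hsummable : ∀ x : ℝ, Summable (fun n : ℤ => b n * ftR (⇑u) (x - (n:ℝ))) := by
    intro x
    apply Summable.of_norm
    refine Summable.of_nonneg_of_le (fun n => norm_nonneg _) (fun n => ?_)
      (((hsummable_inv x)).mul_left ((∑' n : ℤ, ‖b n‖ ^ p) ^ (1/p) * C))
    rw [norm_mul, mul_assoc]
    exact mul_le_mul (hT n) (hCle _) (norm_nonneg _)
      (Real.rpow_nonneg (tsum_nonneg fun m => by positivity) _)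
  have hsnorm : ∀ x : ℝ, Summable (fun n : ℤ => ‖b n * ftR (⇑u) (x - (n:ℝ))‖) :=
    fun x => summable_norm_iff.2 (hsummable x)
  set g : ℝ → ℂ := fun x : ℝ => ∑' n : ℤ, b n * ftR (⇑u) (x - (n:ℝ)) with hg
  have hsm : StronglyMeasurable g := by
    apply stronglyMeasurable_of_tendsto (Filter.atTop : Filter (Finset ℤ))
      (f := fun s : Finset ℤ => fun x : ℝ => ∑ n ∈ s, b n * ftR (⇑u) (x - (n:ℝ)))
    · intro s
      apply Continuous.stronglyMeasurable
      exact continuous_finset_sum s fun n _ =>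
        continuous_const.mul (hftc.comp (continuous_id.sub continuous_const))
    · rw [tendsto_pi_nhds]
      intro x
      exact (hsummable x).hasSum
  have hgnorm : ∀ x : ℝ, ENNReal.ofReal ‖g x‖ ≤ ∑' n : ℤ, A n * W n x := by
    intro x
    calc ENNReal.ofReal ‖g x‖
        ≤ ENNReal.ofReal (∑' n : ℤ, ‖b n * ftR (⇑u) (x - (n:ℝ))‖) :=
          ENNReal.ofReal_le_ofReal (norm_tsum_le_tsum_norm (hsnorm x))
      _ = ∑' n : ℤ, ENNReal.ofReal ‖b n * ftR (⇑u) (x - (n:ℝ))‖ :=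
          ENNReal.ofReal_tsum_of_nonneg (fun n => norm_nonneg _) (hsnorm x)
      _ = ∑' n : ℤ, A n * W n x := by
          congr 1; funext n
          rw [norm_mul, ENNReal.ofReal_mul (norm_nonneg _)]
  have key : ∀ x : ℝ, (ENNReal.ofReal ‖g x‖) ^ p
      ≤ M ^ (p-1) * ∑' n : ℤ, W n x * A n ^ p := by
    intro x
    have h2 : ∑' n : ℤ, A n * W n x
        ≤ (∑' n : ℤ, W n x) ^ (1 - p⁻¹) * (∑' n : ℤ, W n x * A n ^ p) ^ p⁻¹ := by
      have h3 := holder_tsum hp (fun n => W n x) A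
      have h4 : ∑' n : ℤ, A n * W n x = ∑' n : ℤ, W n x * A n := by
        congr 1; funext n; rw [mul_comm]
      rw [h4]; exact h3
    have hppos : (0:ℝ) ≤ p := hp0.le
    calc (ENNReal.ofReal ‖g x‖) ^ p
        ≤ (∑' n : ℤ, A n * W n x) ^ p := ENNReal.rpow_le_rpow (hgnorm x) hppos
      _ ≤ ((∑' n : ℤ, W n x) ^ (1 - p⁻¹) * (∑' n : ℤ, W n x * A n ^ p) ^ p⁻¹) ^ p :=
          ENNReal.rpow_le_rpow h2 hppos
      _ = (∑' n : ℤ, W n x) ^ ((1 - p⁻¹) * p) * (∑' n : ℤ, W n x * A n ^ p) ^ (p⁻¹ * p) := by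
          rw [ENNReal.mul_rpow_of_nonneg _ _ hppos, ← ENNReal.rpow_mul, ← ENNReal.rpow_mul]
      _ = (∑' n : ℤ, W n x) ^ (p - 1) * (∑' n : ℤ, W n x * A n ^ p) := by
          rw [show (1 - p⁻¹) * p = p - 1 by field_simp, inv_mul_cancel₀ hpne,
            ENNReal.rpow_one]
      _ ≤ M ^ (p-1) * (∑' n : ℤ, W n x * A n ^ p) :=
          mul_le_mul_left (ENNReal.rpow_le_rpow (hsumW x) (by linarith : (0:ℝ) ≤ p - 1)) _
  have hWint : ∀ n : ℤ, ∫⁻ x : ℝ, W n x ≤ M := by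
    intro n
    have ht : ∫⁻ x : ℝ, W n x = ∫⁻ x : ℝ, ENNReal.ofReal ‖ftR (⇑u) x‖ :=
      lintegral_sub_right_eq_self (fun x => ENNReal.ofReal ‖ftR (⇑u) x‖) (n:ℝ)
    rw [ht]
    calc ∫⁻ x : ℝ, ENNReal.ofReal ‖ftR (⇑u) x‖
        ≤ ∫⁻ x : ℝ, ENNReal.ofReal (C * (1+x^2)⁻¹) :=
          lintegral_mono fun x => ENNReal.ofReal_le_ofReal (hCle x)
      _ = ENNReal.ofReal (∫ x : ℝ, C * (1+x^2)⁻¹) :=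
          (ofReal_integral_eq_lintegral_ofReal (integrable_inv_one_add_sq.const_mul C)
            (Filter.Eventually.of_forall fun x => by positivity)).symm
      _ = ENNReal.ofReal (C * Real.pi) := by
          rw [integral_const_mul, integral_univ_inv_one_add_sq]
      _ ≤ M := by
          apply ENNReal.ofReal_le_ofReal
          rw [hnmb_eq]
          nlinarith [Real.pi_le_four]
  have hmeasW : ∀ n : ℤ, Measurable (fun x : ℝ => W n x * A n ^ p) := by
    intro n
    exact (ENNReal.measurable_ofReal.comp
      ((hftc.comp (continuous_id.sub continuous_const)).norm.measurable)).mul_const _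
  have hkey2 : ∫⁻ x : ℝ, ∑' n : ℤ, W n x * A n ^ p ≤ M * ∑' n : ℤ, A n ^ p := by
    rw [lintegral_tsum (fun n => (hmeasW n).aemeasurable)]
    calc ∑' n : ℤ, ∫⁻ x : ℝ, W n x * A n ^ p
        = ∑' n : ℤ, A n ^ p * ∫⁻ x : ℝ, W n x := by
          congr 1; funext n
          rw [lintegral_mul_const' _ _ (ENNReal.rpow_ne_top_of_nonneg hp0.le
            ENNReal.ofReal_ne_top), mul_comm]
      _ ≤ ∑' n : ℤ, A n ^ p * M :=
          ENNReal.tsum_le_tsum fun n => mul_le_mul_right (hWint n) _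
      _ = M * ∑' n : ℤ, A n ^ p := by rw [ENNReal.tsum_mul_right, mul_comm]
  have hMne : M ^ (p-1) ≠ ⊤ :=
    ENNReal.rpow_ne_top_of_nonneg (by linarith) ENNReal.ofReal_ne_top
  have main : ∫⁻ x : ℝ, (ENNReal.ofReal ‖g x‖) ^ p ≤ M ^ p * ∑' n : ℤ, A n ^ p := by
    calc ∫⁻ x : ℝ, (ENNReal.ofReal ‖g x‖) ^ p
        ≤ ∫⁻ x : ℝ, M ^ (p-1) * ∑' n : ℤ, W n x * A n ^ p := lintegral_mono key
      _ = M ^ (p-1) * ∫⁻ x : ℝ, ∑' n : ℤ, W n x * A n ^ p :=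
          lintegral_const_mul' _ _ hMne
      _ ≤ M ^ (p-1) * (M * ∑' n : ℤ, A n ^ p) := mul_le_mul_right hkey2 _
      _ = M ^ p * ∑' n : ℤ, A n ^ p := by
          have hMM : M ^ (p-1) * M = M ^ p := by
            nth_rewrite 2 [← ENNReal.rpow_one M]
            rw [← ENNReal.rpow_add_of_nonneg _ _ (by linarith) zero_le_one]
            norm_num
          rw [← mul_assoc, hMM]
  set S := ∑' n : ℤ, A n ^ p with hSdef
  have hS : S = ENNReal.ofReal (∑' n : ℤ, ‖b n‖ ^ p) := by
    rw [hSdef, ENNReal.ofReal_tsum_of_nonneg (fun n => by positivity) hb]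
    refine tsum_congr fun n => ?_
    show (ENNReal.ofReal ‖b n‖) ^ p = ENNReal.ofReal (‖b n‖ ^ p)
    exact ENNReal.ofReal_rpow_of_nonneg (norm_nonneg _) hp0.le
  have hLp : eLpNorm g (ENNReal.ofReal p) volume
      = (∫⁻ x : ℝ, (ENNReal.ofReal ‖g x‖) ^ p) ^ (1/p) := by
    rw [eLpNorm_eq_lintegral_rpow_enorm_toReal
      (by simp only [ne_eq, ENNReal.ofReal_eq_zero, not_le]; linarith)
      ENNReal.ofReal_ne_top]
    rw [ENNReal.toReal_ofReal hp0.le]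
    congr 1
    apply lintegral_congr
    intro x
    rw [← ofReal_norm_eq_enorm]
  have hfinal : eLpNorm g (ENNReal.ofReal p) volume ≤ M * S ^ (1/p) := by
    rw [hLp]
    calc (∫⁻ x : ℝ, (ENNReal.ofReal ‖g x‖) ^ p) ^ (1/p)
        ≤ (M ^ p * S) ^ (1/p) := ENNReal.rpow_le_rpow main (by positivity)
      _ = M * S ^ (1/p) := by
          rw [ENNReal.mul_rpow_of_nonneg _ _ (by positivity), ← ENNReal.rpow_mul,
            mul_one_div, div_self hpne, ENNReal.rpow_one]
  have hrhs : ENNReal.ofReal (nmb u * (∑' n : ℤ, ‖b n‖ ^ p) ^ (1/p)) = M * S ^ (1/p) := by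
    rw [ENNReal.ofReal_mul hnmb0, hS,
      ENNReal.ofReal_rpow_of_nonneg (tsum_nonneg fun n => by positivity) (by positivity)]
  constructor
  · refine ⟨hsm.aestronglyMeasurable, ?_⟩
    exact lt_of_le_of_lt (hrhs ▸ hfinal) ENNReal.ofReal_lt_top
  · rw [hrhs]; exact hfinal
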